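/- (Devaney–Nitecki, real horseshoe locus) If a, b ∈ ℝ satisfy b ≠ 0 and a > (5 + 2√5)(1+|b|)²/4, then the Hénon map H_{a,b} restricted to K^ℝ_{a,b} is topologically conjugate to the full 2-shift: there exists a homeomorphism h from K^ℝ_{a,b} (with the subspace topology of ℝ²) onto Σ₂ such that h(H_{a,b}(p)) = σ(h(p)) for all p ∈ K^ℝ_{a,b}. -/

import Mathlib

/-- The Hénon map `H_{a,b}(x,y) = (a - x² - b·y, x)` on `ℝ²`. -/
def henon (a b : ℝ) (p : ℝ × ℝ) : ℝ × ℝ := (a - p.1 ^ 2 - b * p.2, p.1)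

/-- `K^ℝ_{a,b}`: the set of points whose full orbit `{H^n(p) : n ∈ ℤ}` is bounded.
A full orbit through `p` is a sequence `o : ℤ → ℝ²` with `o 0 = p` and
`o (n+1) = H (o n)` for all `n ∈ ℤ`. -/
def henonK (a b : ℝ) : Set (ℝ × ℝ) :=
  {p | ∃ o : ℤ → ℝ × ℝ, o 0 = p ∧ (∀ n : ℤ, o (n + 1) = henon a b (o n)) ∧
    Bornology.IsBounded (Set.range o)}

/-- The full 2-shift `Σ₂ = {0,1}^ℤ` (product topology, `{0,1}` discrete). -/
abbrev Sigma2 := ℤ → Fin 2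

/-- The shift map `(σ s)_i = s_{i+1}`. -/
def shift (s : Sigma2) : Sigma2 := fun i => s (i + 1)

/-- The pruning pattern occurs in `s` at position `i` if `s_{i-1} = 1`, `s_{i+1} = 1`,
`s_{i-1-k} = 0` for `1 ≤ k ≤ N` and `s_{i+1+k} = 0` for `1 ≤ k ≤ M`. -/
def pattern (N M : ℕ) (s : Sigma2) (i : ℤ) : Prop :=
  s (i - 1) = 1 ∧ s (i + 1) = 1 ∧
    (∀ k : ℕ, 1 ≤ k → k ≤ N → s (i - 1 - (k : ℤ)) = 0) ∧
    (∀ k : ℕ, 1 ≤ k → k ≤ M → s (i + 1 + (k : ℤ)) = 0)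

open Classical in
/-- The pruning automorphism `ρ_{N,M}`: it flips coordinate `i` exactly when the
pruning pattern occurs in `s` at position `i`. -/
noncomputable def rho (N M : ℕ) (s : Sigma2) : Sigma2 :=
  fun i => if pattern N M s i then 1 - s i else s i



/-- Bundle of constants for the Devaney–Nitecki horseshoe estimates. -/
structure HGood (a b W R r : ℝ) : Prop where
  hW : W = 1 + |b|
  hW1 : 1 ≤ W
  hR2 : R ^ 2 = W * R + a
  hRW : W < R
  hr0 : 0 < r
  hr2 : r ^ 2 = a - W * R
  hkey : W < 2 * r
  hrR : r ≤ R

set_option maxHeartbeats 1000000 in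
lemma exists_hgood (a b : ℝ)
    (ha : a > (5 + 2 * Real.sqrt 5) * (1 + |b|) ^ 2 / 4) :
    ∃ W R r : ℝ, HGood a b W R r := by
  set s : ℝ := Real.sqrt 5 with hs
  clear_value s
  have hs2 : s ^ 2 = 5 := hs ▸ Real.sq_sqrt (by norm_num)
  have hs0 : 0 ≤ s := hs ▸ Real.sqrt_nonneg 5
  have hs5 : (2:ℝ) ≤ s := by nlinarith
  set W : ℝ := 1 + |b| with hWdef
  clear_value W
  have hW1 : 1 ≤ W := by simp [hWdef, abs_nonneg]
  have hW0 : 0 < W := lt_of_lt_of_le one_pos hW1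
  have haW : a > (5 + 2*s) * W ^ 2 / 4 := ha
  have ha0 : 0 < a := by nlinarith
  set D : ℝ := Real.sqrt (W^2 + 4*a) with hDdef
  clear_value D
  have hD0 : 0 ≤ D := hDdef ▸ Real.sqrt_nonneg _
  have hD2 : D ^ 2 = W^2 + 4*a := hDdef ▸ Real.sq_sqrt (by positivity)
  have hDW : W < D := by nlinarith
  set R : ℝ := (W + D) / 2 with hRdef
  clear_value R
  have hR2 : R ^ 2 = W * R + a := by rw [hRdef]; ring_nf; nlinarith [hD2]
  have hRW : W < R := by rw [hRdef]; linarith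
  -- key inequality : 4*(a - W*R) > W^2
  have hstep1 : 4*a - 3*W^2 > 0 := by nlinarith
  have hfact : (4*a - (5+2*s)*W^2) * (4*a - (5-2*s)*W^2) = 16*a^2 - 40*a*W^2 + 5*W^4 := by
    linear_combination (-4*W^4) * hs2
  have hstep2 : (4*a - 3*W^2)^2 > 4*W^2*(W^2 + 4*a) := by
    nlinarith [mul_pos (by linarith : (0:ℝ) < 4*a - (5+2*s)*W^2) (by nlinarith [mul_nonneg hs0 (sq_nonneg W)] : (0:ℝ) < 4*a - (5-2*s)*W^2), hfact]
  have hstep3 : 4*a - 3*W^2 > 2*W*D := by nlinarith [sq_nonneg (4*a - 3*W^2 - 2*W*D), mul_pos hW0 (lt_of_le_of_lt (le_refl (0:ℝ)) (lt_of_lt_of_le hW0 (le_of_lt hDW)) : (0:ℝ) < D)]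
  have hsub : a - W*R > W^2/4 := by rw [hRdef]; nlinarith
  set r : ℝ := Real.sqrt (a - W*R) with hrdef
  clear_value r
  have hr2 : r ^ 2 = a - W*R := hrdef ▸ Real.sq_sqrt (by nlinarith)
  have hkey : W < 2*r := by
    have : W/2 < r := by
      rw [hrdef]
      exact (Real.lt_sqrt (by positivity)).2 (by nlinarith)
    linarith
  have hr0 : 0 < r := by linarith
  have hrR : r ≤ R := by nlinarith [mul_pos hW0 (lt_trans hW0 hRW)]
  exact ⟨W, R, r, hWdef, hW1, hR2, hRW, hr0, hr2, hkey, hrR⟩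


lemma seq_bound {a b W R r : ℝ} (hg : HGood a b W R r) (x : ℤ → ℝ)
    (hrec : ∀ n : ℤ, x (n+1) = a - (x n)^2 - b * x (n-1))
    (C : ℝ) (hC : ∀ n, |x n| ≤ C) :
    ∀ n : ℤ, r ≤ |x n| ∧ |x n| ≤ R := by
  obtain ⟨hW, hW1, hR2, hRW, hr0, hr2, hkey, hrR⟩ := hg
  have hb0 : 0 ≤ |b| := abs_nonneg b
  have hsq : ∀ n : ℤ, (x n)^2 = a - x (n+1) - b * x (n-1) := fun n => by
    have h := hrec n; linarith
  set T := sSup (Set.range fun n : ℤ => |x n|) with hT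
  have hne : (Set.range fun n : ℤ => |x n|).Nonempty := ⟨|x 0|, ⟨0, rfl⟩⟩
  have hbdd : BddAbove (Set.range fun n : ℤ => |x n|) :=
    ⟨C, by rintro _ ⟨n, rfl⟩; exact hC n⟩
  have hleT : ∀ n, |x n| ≤ T := fun n => le_csSup hbdd ⟨n, rfl⟩
  have hT0 : 0 ≤ T := le_trans (abs_nonneg _) (hleT 0)
  have hup : ∀ n : ℤ, (x n)^2 ≤ a + W*T := by
    intro n
    have h1 := hsq n
    have h2 : |x (n+1)| ≤ T := hleT _
    have h3 : |b * x (n-1)| ≤ |b| * T := by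
      rw [abs_mul]; exact mul_le_mul_of_nonneg_left (hleT _) hb0
    have h4 := neg_abs_le (x (n+1))
    have h5 := neg_abs_le (b * x (n-1))
    nlinarith
  have haWT : 0 ≤ a + W*T := le_trans (sq_nonneg (x 0)) (hup 0)
  have hTle : T ≤ Real.sqrt (a + W*T) := by
    refine csSup_le hne ?_
    rintro _ ⟨n, rfl⟩
    exact (Real.le_sqrt (abs_nonneg _) haWT).2 (by rw [sq_abs]; exact hup n)
  have hT2 : T^2 ≤ a + W*T := by
    nlinarith [Real.sq_sqrt haWT, Real.sqrt_nonneg (a + W*T)]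
  have hTR : T ≤ R := by nlinarith
  intro n
  constructor
  · have h1 := hsq n
    have h2 : x (n+1) ≤ R := le_trans (le_abs_self _) (le_trans (hleT _) hTR)
    have h3 : b * x (n-1) ≤ |b| * R := by
      calc b * x (n-1) ≤ |b * x (n-1)| := le_abs_self _
        _ = |b| * |x (n-1)| := abs_mul _ _
        _ ≤ |b| * R := mul_le_mul_of_nonneg_left (le_trans (hleT _) hTR) hb0
    have h4 : r^2 ≤ (x n)^2 := by nlinarith
    nlinarith [abs_nonneg (x n), sq_abs (x n)]
  · exact le_trans (hleT n) hTR

lemma seq_unique {a b W R r : ℝ} (hg : HGood a b W R r) (x y : ℤ → ℝ)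
    (hx : ∀ n : ℤ, x (n+1) = a - (x n)^2 - b * x (n-1))
    (hy : ∀ n : ℤ, y (n+1) = a - (y n)^2 - b * y (n-1))
    (hxb : ∀ n : ℤ, r ≤ |x n| ∧ |x n| ≤ R)
    (hyb : ∀ n : ℤ, r ≤ |y n| ∧ |y n| ≤ R)
    (hsgn : ∀ n : ℤ, 0 < x n ↔ 0 < y n) :
    ∀ n : ℤ, x n = y n := by
  obtain ⟨hW, hW1, hR2, hRW, hr0, hr2, hkey, hrR⟩ := hg
  have hb0 : 0 ≤ |b| := abs_nonneg b
  set d : ℤ → ℝ := fun n => x n - y n with hd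
  set T := sSup (Set.range fun n : ℤ => |d n|) with hT
  have hne : (Set.range fun n : ℤ => |d n|).Nonempty := ⟨|d 0|, ⟨0, rfl⟩⟩
  have hbdd : BddAbove (Set.range fun n : ℤ => |d n|) := by
    refine ⟨2*R, ?_⟩
    rintro _ ⟨n, rfl⟩
    have := (hxb n).2; have := (hyb n).2
    simp only [hd]
    calc |x n - y n| ≤ |x n| + |y n| := abs_sub _ _
      _ ≤ 2*R := by linarith
  have hleT : ∀ n, |d n| ≤ T := fun n => le_csSup hbdd ⟨n, rfl⟩
  have hT0 : 0 ≤ T := le_trans (abs_nonneg _) (hleT 0)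
  have key : ∀ n : ℤ, 2*r*|d n| ≤ W * T := by
    intro n
    have hid : (x n + y n) * d n = -(d (n+1)) - b * d (n-1) := by
      simp only [hd]; linear_combination hx n - hy n
    have habs : 2*r ≤ |x n + y n| := by
      rcases lt_or_ge 0 (x n) with h | h
      · have h' := (hsgn n).1 h
        have h1 : r ≤ x n := by have := (hxb n).1; rwa [abs_of_pos h] at this
        have h2 : r ≤ y n := by have := (hyb n).1; rwa [abs_of_pos h'] at this
        calc 2*r ≤ x n + y n := by linarith
          _ ≤ |x n + y n| := le_abs_self _
      · have h' : ¬ (0 < y n) := fun hc => absurd ((hsgn n).2 hc) (not_lt.2 h)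
        have h1 : x n ≤ -r := by
          have := (hxb n).1; rw [abs_of_nonpos h] at this; linarith
        have h2 : y n ≤ -r := by
          have := (hyb n).1; rw [abs_of_nonpos (not_lt.1 h')] at this; linarith
        calc 2*r ≤ -(x n + y n) := by linarith
          _ ≤ |x n + y n| := neg_le_abs _
    have h1 : |(x n + y n) * d n| ≤ W * T := by
      rw [hid]
      have h2 : |(-(d (n+1)) - b * d (n-1))| ≤ |d (n+1)| + |b| * |d (n-1)| := by
        calc |(-(d (n+1)) - b * d (n-1))| ≤ |(-(d (n+1)))| + |b * d (n-1)| := abs_sub _ _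
          _ = |d (n+1)| + |b| * |d (n-1)| := by rw [abs_neg, abs_mul]
      have h3 := hleT (n+1)
      have h4 : |b| * |d (n-1)| ≤ |b| * T := mul_le_mul_of_nonneg_left (hleT _) hb0
      calc |(-(d (n+1)) - b * d (n-1))| ≤ |d (n+1)| + |b| * |d (n-1)| := h2
        _ ≤ W * T := by rw [hW]; nlinarith
    calc 2*r*|d n| ≤ |x n + y n| * |d n| :=
          mul_le_mul_of_nonneg_right habs (abs_nonneg _)
      _ = |(x n + y n) * d n| := (abs_mul _ _).symm
      _ ≤ W * T := h1
  have hTle : T ≤ W*T/(2*r) := by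
    refine csSup_le hne ?_
    rintro _ ⟨n, rfl⟩
    rw [le_div_iff₀ (by linarith : (0:ℝ) < 2*r)]
    linarith [key n]
  have hT00 : T ≤ 0 := by
    rw [le_div_iff₀ (by linarith : (0:ℝ) < 2*r)] at hTle
    nlinarith
  intro n
  have h := hleT n
  have : |d n| = 0 := le_antisymm (le_trans h hT00) (abs_nonneg _)
  have := abs_eq_zero.1 this
  simp only [hd] at this
  linarith

set_option maxHeartbeats 1000000 in
lemma seq_exists {a b W R r : ℝ} (hg : HGood a b W R r) (s : Sigma2) :
    ∃ x : ℤ → ℝ, (∀ n : ℤ, x (n+1) = a - (x n)^2 - b * x (n-1)) ∧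
      (∀ n : ℤ, r ≤ |x n| ∧ |x n| ≤ R) ∧ (∀ n : ℤ, 0 < x n ↔ s n = 1) := by
  obtain ⟨hW, hW1, hR2, hRW, hr0, hr2, hkey, hrR⟩ := hg
  have hR0 : 0 < R := lt_of_lt_of_le hr0 hrR
  have hb0 : 0 ≤ |b| := abs_nonneg b
  set e : ℤ → ℝ := fun n => if s n = 1 then 1 else -1 with he
  have he1 : ∀ n, |e n| = 1 := fun n => by by_cases h : s n = 1 <;> simp [he, h]
  have he2 : ∀ n, (e n)^2 = 1 := fun n => by by_cases h : s n = 1 <;> simp [he, h]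
  set A : Set (BoundedContinuousFunction ℤ ℝ) := {f | ∀ n, f n ∈ Set.Icc r R} with hA
  set arg : (ℤ → ℝ) → ℤ → ℝ :=
    fun f n => a - e (n+1) * f (n+1) - b * (e (n-1) * f (n-1)) with harg
  have harg_mem : ∀ f : BoundedContinuousFunction ℤ ℝ, f ∈ A → ∀ n : ℤ,
      r^2 ≤ arg (⇑f) n ∧ arg (⇑f) n ≤ R^2 := by
    intro f hf n
    obtain ⟨h1l, h1u⟩ := hf (n+1)
    obtain ⟨h2l, h2u⟩ := hf (n-1)
    have hf1 : |e (n+1) * f (n+1)| ≤ R := by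
      rw [abs_mul, he1, one_mul, abs_of_nonneg (by linarith)]; exact h1u
    have hf2 : |b * (e (n-1) * f (n-1))| ≤ |b| * R := by
      rw [abs_mul, abs_mul, he1, one_mul,
        abs_of_nonneg (show (0:ℝ) ≤ f (n-1) by linarith)]
      exact mul_le_mul_of_nonneg_left h2u hb0
    have h3 := le_abs_self (e (n+1) * f (n+1))
    have h4 := neg_abs_le (e (n+1) * f (n+1))
    have h5 := le_abs_self (b * (e (n-1) * f (n-1)))
    have h6 := neg_abs_le (b * (e (n-1) * f (n-1)))
    constructor
    · simp only [harg]; rw [hW] at *; nlinarith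
    · simp only [harg]; rw [hW] at *; nlinarith
  have hsqrt_mem : ∀ f : BoundedContinuousFunction ℤ ℝ, f ∈ A → ∀ n : ℤ,
      Real.sqrt (arg (⇑f) n) ∈ Set.Icc r R := by
    intro f hf n
    obtain ⟨hl, hu⟩ := harg_mem f hf n
    constructor
    · rw [show r = Real.sqrt (r^2) by rw [Real.sqrt_sq hr0.le]]
      exact Real.sqrt_le_sqrt hl
    · rw [show R = Real.sqrt (R^2) by rw [Real.sqrt_sq hR0.le]]
      exact Real.sqrt_le_sqrt hu
  have hcont : ∀ g : ℤ → ℝ, Continuous g := fun g => continuous_of_discreteTopology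
  set T : A → A := fun f =>
    ⟨BoundedContinuousFunction.mkOfBound ⟨fun n => Real.sqrt (arg (⇑(f:BoundedContinuousFunction ℤ ℝ)) n), hcont _⟩ (2*R)
      (fun nx ny => by
        have h1 := hsqrt_mem f f.2 nx
        have h2 := hsqrt_mem f f.2 ny
        rw [Real.dist_eq, abs_le]
        constructor <;> simp only [ContinuousMap.coe_mk] <;>
          [linarith [h1.1, h2.2, h1.2, h2.1]; linarith [h1.2, h2.1]]),
     fun n => hsqrt_mem f f.2 n⟩ with hTdef
  have hclosed : IsClosed A := by
    have : A = ⋂ n : ℤ, (fun f : BoundedContinuousFunction ℤ ℝ => f n) ⁻¹' Set.Icc r R := by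
      ext f; simp [hA, Set.mem_iInter]
    rw [this]
    exact isClosed_iInter fun n =>
      IsClosed.preimage (continuous_eval_const n) isClosed_Icc
  haveI : CompleteSpace A := hclosed.completeSpace_coe
  haveI : Nonempty A := ⟨⟨BoundedContinuousFunction.const ℤ R, fun n => by
    simp [Set.mem_Icc]; exact hrR⟩⟩
  set K : NNReal := ⟨W/(2*r), by positivity⟩ with hKdef
  have hK1 : K < 1 := by
    rw [← NNReal.coe_lt_coe]
    show W/(2*r) < 1
    rw [div_lt_one (by linarith)]; linarith
  have hlip : LipschitzWith K T := by
    refine LipschitzWith.of_dist_le_mul (fun f g => ?_)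
    rw [Subtype.dist_eq, BoundedContinuousFunction.dist_le (by positivity)]
    intro n
    show dist (Real.sqrt (arg (⇑(f:BoundedContinuousFunction ℤ ℝ)) n))
      (Real.sqrt (arg (⇑(g:BoundedContinuousFunction ℤ ℝ)) n)) ≤ _
    set u := Real.sqrt (arg (⇑(f:BoundedContinuousFunction ℤ ℝ)) n) with hu
    set v := Real.sqrt (arg (⇑(g:BoundedContinuousFunction ℤ ℝ)) n) with hv
    have hfl := (harg_mem f f.2 n).1
    have hgl := (harg_mem g g.2 n).1
    have hr2' : (0:ℝ) ≤ r^2 := sq_nonneg r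
    have hu2 : u^2 = arg (⇑(f:BoundedContinuousFunction ℤ ℝ)) n :=
      Real.sq_sqrt (le_trans hr2' hfl)
    have hv2 : v^2 = arg (⇑(g:BoundedContinuousFunction ℤ ℝ)) n :=
      Real.sq_sqrt (le_trans hr2' hgl)
    have hul := (hsqrt_mem f f.2 n).1
    have hvl := (hsqrt_mem g g.2 n).1
    have hsum : 2*r ≤ u + v := by rw [hu, hv]; linarith
    have hid : (u - v) * (u + v) = arg (⇑(f:BoundedContinuousFunction ℤ ℝ)) n
        - arg (⇑(g:BoundedContinuousFunction ℤ ℝ)) n := by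
      linear_combination hu2 - hv2
    set Dd := dist (f:BoundedContinuousFunction ℤ ℝ) (g:BoundedContinuousFunction ℤ ℝ) with hDd
    have hargdiff : |arg (⇑(f:BoundedContinuousFunction ℤ ℝ)) n
        - arg (⇑(g:BoundedContinuousFunction ℤ ℝ)) n| ≤ W * Dd := by
      have hkeyid : arg (⇑(f:BoundedContinuousFunction ℤ ℝ)) n
          - arg (⇑(g:BoundedContinuousFunction ℤ ℝ)) n
          = (-(e (n+1))) * ((f:BoundedContinuousFunction ℤ ℝ) (n+1) - (g:BoundedContinuousFunction ℤ ℝ) (n+1))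
          + (-(b * e (n-1))) * ((f:BoundedContinuousFunction ℤ ℝ) (n-1) - (g:BoundedContinuousFunction ℤ ℝ) (n-1)) := by
        simp only [harg]; ring
      rw [hkeyid]
      have d1 : |(f:BoundedContinuousFunction ℤ ℝ) (n+1) - (g:BoundedContinuousFunction ℤ ℝ) (n+1)| ≤ Dd := by
        rw [← Real.dist_eq]; exact BoundedContinuousFunction.dist_coe_le_dist _
      have d2 : |(f:BoundedContinuousFunction ℤ ℝ) (n-1) - (g:BoundedContinuousFunction ℤ ℝ) (n-1)| ≤ Dd := by
        rw [← Real.dist_eq]; exact BoundedContinuousFunction.dist_coe_le_dist _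
      have hD0 : 0 ≤ Dd := dist_nonneg
      calc |_ + _| ≤ |(-(e (n+1))) * ((f:BoundedContinuousFunction ℤ ℝ) (n+1) - (g:BoundedContinuousFunction ℤ ℝ) (n+1))|
            + |(-(b * e (n-1))) * ((f:BoundedContinuousFunction ℤ ℝ) (n-1) - (g:BoundedContinuousFunction ℤ ℝ) (n-1))| := abs_add_le _ _
        _ ≤ W * Dd := by
            rw [abs_mul, abs_mul, abs_neg, abs_neg, he1, one_mul, abs_mul, he1, mul_one, hW]
            nlinarith
    rw [Real.dist_eq]
    have habs : |u - v| * (u + v) = |arg (⇑(f:BoundedContinuousFunction ℤ ℝ)) n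
        - arg (⇑(g:BoundedContinuousFunction ℤ ℝ)) n| := by
      rw [← hid, abs_mul, abs_of_nonneg (by linarith : (0:ℝ) ≤ u + v)]
    show |u - v| ≤ (K:ℝ) * Dd
    have hKc : (K:ℝ) = W/(2*r) := rfl
    rw [hKc, div_mul_eq_mul_div, le_div_iff₀ (by linarith : (0:ℝ) < 2*r)]
    nlinarith [abs_nonneg (u - v), dist_nonneg (x := (f:BoundedContinuousFunction ℤ ℝ)) (y := (g:BoundedContinuousFunction ℤ ℝ))]
  have hCW : ContractingWith K T := ⟨hK1, hlip⟩
  set uu : A := ContractingWith.fixedPoint T hCW with huu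
  have hfix : T uu = uu := hCW.fixedPoint_isFixedPt
  set xu : ℤ → ℝ := fun n => (uu : BoundedContinuousFunction ℤ ℝ) n with hxu
  have hux : ∀ n : ℤ, Real.sqrt (arg xu n) = xu n := by
    intro n
    have h := congrArg (fun w : A => (w : BoundedContinuousFunction ℤ ℝ) n) hfix
    exact h
  have humem : ∀ n, xu n ∈ Set.Icc r R := fun n => uu.2 n
  have hsq : ∀ n : ℤ, (xu n)^2 = arg xu n := by
    intro n
    rw [← hux n]
    exact Real.sq_sqrt (le_trans (sq_nonneg r) (harg_mem _ uu.2 n).1)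
  have hrec : ∀ n : ℤ, e (n+1) * xu (n+1) = a - (e n * xu n)^2 - b * (e (n-1) * xu (n-1)) := by
    intro n
    have h := hsq n
    simp only [harg] at h
    linear_combination (xu n)^2 * he2 n + h
  have hbnd : ∀ n : ℤ, r ≤ |e n * xu n| ∧ |e n * xu n| ≤ R := by
    intro n
    have h := humem n
    rw [abs_mul, he1, one_mul, abs_of_nonneg (show (0:ℝ) ≤ xu n by linarith [h.1])]
    exact ⟨h.1, h.2⟩
  have hsgn : ∀ n : ℤ, (0 < e n * xu n ↔ s n = 1) := by
    intro n
    have h := humem n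
    by_cases hs : s n = 1
    · have hen : e n = 1 := by simp [he, hs]
      refine ⟨fun _ => hs, fun _ => ?_⟩
      rw [hen, one_mul]; linarith [h.1]
    · have hen : e n = -1 := by simp [he, hs]
      refine ⟨fun hpos => ?_, fun hc => absurd hc hs⟩
      exfalso
      rw [hen] at hpos
      nlinarith [h.1]
  exact ⟨fun n => e n * xu n, hrec, hbnd, hsgn⟩

lemma fin2cases (t : Fin 2) : t = 0 ∨ t = 1 := by fin_cases t <;> simp


set_option maxHeartbeats 2000000 in
/-- (Devaney–Nitecki, real horseshoe locus) If `b ≠ 0` and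
`a > (5 + 2√5)(1+|b|)²/4`, then `H_{a,b}` restricted to `K^ℝ_{a,b}` is
topologically conjugate to the full 2-shift. -/
theorem henon_real_horseshoe (a b : ℝ) (hb : b ≠ 0)
    (ha : a > (5 + 2 * Real.sqrt 5) * (1 + |b|) ^ 2 / 4) :
    Set.MapsTo (henon a b) (henonK a b) (henonK a b) ∧
    ∃ h : (henonK a b) ≃ₜ Sigma2,
      ∀ (p : henonK a b) (hq : henon a b (p : ℝ × ℝ) ∈ henonK a b),
        h ⟨henon a b (p : ℝ × ℝ), hq⟩ = shift (h p) := by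
  obtain ⟨W, R, r, hg⟩ := exists_hgood a b ha
  have hW := hg.hW; have hW1 := hg.hW1; have hR2 := hg.hR2; have hRW := hg.hRW
  have hr0 := hg.hr0; have hr2 := hg.hr2; have hkeyI := hg.hkey; have hrR := hg.hrR
  have hR0 : 0 < R := lt_of_lt_of_le hr0 hrR
  -- MapsTo part
  have hmaps : Set.MapsTo (henon a b) (henonK a b) (henonK a b) := by
    rintro q ⟨o, h0, hrec, hbd⟩
    refine ⟨fun n => o (n+1), ?_, fun n => ?_, ?_⟩
    · simpa [h0] using hrec 0
    · exact hrec (n+1)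
    · exact hbd.subset (by rintro _ ⟨n, rfl⟩; exact ⟨n+1, rfl⟩)
  -- The Hénon map as a bijection
  set He : Equiv.Perm (ℝ × ℝ) :=
    { toFun := henon a b
      invFun := fun q => (q.2, (a - q.2^2 - q.1)/b)
      left_inv := by
        intro q
        simp only [henon]
        refine Prod.ext rfl ?_
        field_simp
        ring
      right_inv := by
        intro q
        simp only [henon]
        refine Prod.ext ?_ rfl
        field_simp
        ring } with hHe
  have hHeapp : ∀ q, He q = henon a b q := fun q => rfl
  have hHesymm : ∀ q : ℝ × ℝ, He.symm q = (q.2, (a - q.2^2 - q.1)/b) := fun q => rfl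
  have hstep : ∀ (n : ℤ) (q : ℝ × ℝ), (He ^ (n+1)) q = henon a b ((He ^ n) q) := by
    intro n q
    rw [show n + 1 = 1 + n by ring, zpow_add, zpow_one, Equiv.Perm.mul_apply]
    exact hHeapp _
  have hstep' : ∀ (n : ℤ) (q : ℝ × ℝ), (He ^ (n-1)) q = He.symm ((He ^ n) q) := by
    intro n q
    have h := hstep (n-1) q
    rw [sub_add_cancel] at h
    rw [h, ← hHeapp]
    exact (Equiv.symm_apply_apply He _).symm
  -- coordinates of the orbit
  set X : ℝ × ℝ → ℤ → ℝ := fun q n => ((He ^ n) q).1 with hX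
  have hX2 : ∀ (q : ℝ × ℝ) (n : ℤ), ((He ^ n) q).2 = X q (n-1) := by
    intro q n
    have h := hstep (n-1) q
    rw [sub_add_cancel] at h
    rw [h]; rfl
  have hXrec : ∀ (q : ℝ × ℝ) (n : ℤ), X q (n+1) = a - (X q n)^2 - b * X q (n-1) := by
    intro q n
    have h2 := hX2 q n
    simp only [hX]
    rw [hstep n q]
    show a - ((He^n) q).1^2 - b * ((He^n) q).2 = _
    rw [h2]
  have hX0 : ∀ q : ℝ × ℝ, X q 0 = q.1 := by
    intro q; simp only [hX, zpow_zero]; rfl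
  have hXm1 : ∀ q : ℝ × ℝ, X q (-1) = q.2 := by
    intro q
    have h := hX2 q 0
    rw [show (0:ℤ)-1 = -1 by ring] at h
    rw [← h]
    simp only [zpow_zero]; rfl
  -- uniqueness of orbits
  have horb : ∀ (o : ℤ → ℝ × ℝ) (q : ℝ × ℝ), o 0 = q → (∀ n : ℤ, o (n+1) = henon a b (o n)) →
      ∀ n : ℤ, o n = (He ^ n) q := by
    intro o q h0 hrec n
    induction n using Int.induction_on with
    | zero => simpa using h0
    | succ k ih =>
      rw [hrec (k:ℤ), ih]
      exact (hstep (k:ℤ) q).symm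
    | pred k ih =>
      have h := hrec (-(k:ℤ)-1)
      rw [show (-(k:ℤ)-1)+1 = -(k:ℤ) by ring] at h
      rw [hstep' (-(k:ℤ)) q, ← ih, h, ← hHeapp]
      exact (Equiv.symm_apply_apply He _).symm
  -- bounds on coordinates of points in K
  have hKbound : ∀ q ∈ henonK a b, ∀ n : ℤ, r ≤ |X q n| ∧ |X q n| ≤ R := by
    intro q hq
    obtain ⟨o, h0, hrec, hbd⟩ := hq
    have ho : ∀ m : ℤ, o m = (He ^ m) q := horb o q h0 hrec
    obtain ⟨C, hC⟩ := isBounded_iff_forall_norm_le.1 hbd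
    have hxC : ∀ m : ℤ, |X q m| ≤ C := by
      intro m
      have h1 : ‖o m‖ ≤ C := hC _ ⟨m, rfl⟩
      have h2 : |X q m| ≤ ‖o m‖ := by
        rw [ho m, ← Real.norm_eq_abs]
        exact norm_fst_le _
      linarith
    exact seq_bound hg (X q) (hXrec q) C hxC
  -- characterization of K as countable intersection of closed sets
  have hKchar : henonK a b = ⋂ n : ℤ, (fun q => (He ^ n) q) ⁻¹' {w : ℝ × ℝ | |w.1| ≤ R ∧ |w.2| ≤ R} := by
    ext q
    simp only [Set.mem_iInter, Set.mem_preimage, Set.mem_setOf_eq]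
    constructor
    · intro hq n
      refine ⟨(hKbound q hq n).2, ?_⟩
      rw [hX2 q n]
      exact (hKbound q hq (n-1)).2
    · intro hq
      refine ⟨fun n => (He ^ n) q, by simp, fun n => hstep n q, ?_⟩
      rw [isBounded_iff_forall_norm_le]
      refine ⟨R, ?_⟩
      rintro _ ⟨n, rfl⟩
      rw [Prod.norm_def]
      simp only [Real.norm_eq_abs]
      exact max_le (hq n).1 (hq n).2
  have hcontpow : ∀ n : ℤ, Continuous fun q : ℝ × ℝ => (He ^ n) q := by
    intro n
    induction n using Int.induction_on with
    | zero =>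
      have h00 : (fun q : ℝ×ℝ => (He ^ (0:ℤ)) q) = id := funext fun q => by simp
      rw [h00]; exact continuous_id
    | succ k ih =>
      have he : (fun q : ℝ×ℝ => (He ^ ((k:ℤ)+1)) q) = fun q => henon a b ((He ^ (k:ℤ)) q) :=
        funext fun q => hstep _ q
      rw [he]
      have hh : Continuous (henon a b) := by unfold henon; fun_prop
      exact hh.comp ih
    | pred k ih =>
      have he : (fun q : ℝ×ℝ => (He ^ (-(k:ℤ)-1)) q) = fun q => He.symm ((He ^ (-(k:ℤ))) q) :=
        funext fun q => hstep' _ q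
      rw [he]
      have hh : Continuous (fun w : ℝ×ℝ => He.symm w) := by
        have : (fun w : ℝ×ℝ => He.symm w) = fun w : ℝ×ℝ => ((w.2, (a - w.2^2 - w.1)/b) : ℝ×ℝ) :=
          funext fun w => hHesymm w
        rw [this]; fun_prop
      exact hh.comp ih
  have hKclosed : IsClosed (henonK a b) := by
    rw [hKchar]
    refine isClosed_iInter fun n => IsClosed.preimage (hcontpow n) ?_
    have hset : {w : ℝ×ℝ | |w.1| ≤ R ∧ |w.2| ≤ R}
        = {w : ℝ×ℝ | |w.1| ≤ R} ∩ {w : ℝ×ℝ | |w.2| ≤ R} := rfl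
    rw [hset]
    exact IsClosed.inter
      (isClosed_le continuous_fst.abs continuous_const)
      (isClosed_le continuous_snd.abs continuous_const)
  have hKbdd : Bornology.IsBounded (henonK a b) := by
    have hsq : Bornology.IsBounded {w : ℝ×ℝ | |w.1| ≤ R ∧ |w.2| ≤ R} := by
      rw [isBounded_iff_forall_norm_le]
      refine ⟨R, fun w hw => ?_⟩
      rw [Prod.norm_def]
      simp only [Real.norm_eq_abs]
      exact max_le hw.1 hw.2
    refine hsq.subset ?_
    intro q hq
    rw [hKchar] at hq
    have := Set.mem_iInter.1 hq 0
    simpa using this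
  have hKcomp : IsCompact (henonK a b) := Metric.isCompact_of_isClosed_isBounded hKclosed hKbdd
  haveI : CompactSpace (henonK a b) := isCompact_iff_compactSpace.1 hKcomp
  -- the itinerary map
  set itin : henonK a b → Sigma2 := fun p n => if 0 < X (p:ℝ×ℝ) n then 1 else 0 with hitin
  have hinj : Function.Injective itin := by
    intro p p' hpp
    have hsgn : ∀ n : ℤ, 0 < X (p:ℝ×ℝ) n ↔ 0 < X (p':ℝ×ℝ) n := by
      intro n
      have h := congrFun hpp n
      simp only [hitin] at h
      by_cases h1 : 0 < X (p:ℝ×ℝ) n <;> by_cases h2 : 0 < X (p':ℝ×ℝ) n <;>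
        simp only [h1, h2, if_true, if_false, if_pos, if_neg] at h ⊢ <;>
        first
          | tauto
          | (exfalso; revert h; simp [h1, h2])
    have heq := seq_unique hg _ _ (hXrec (p:ℝ×ℝ)) (hXrec (p':ℝ×ℝ))
      (hKbound _ p.2) (hKbound _ p'.2) hsgn
    apply Subtype.ext
    have e0 := heq 0
    rw [hX0, hX0] at e0
    have e1 := heq (-1)
    rw [hXm1, hXm1] at e1
    exact Prod.ext e0 e1
  have hsurj : Function.Surjective itin := by
    intro s
    obtain ⟨x, hxrec, hxb, hxsgn⟩ := seq_exists hg s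
    set q : ℝ × ℝ := (x 0, x (-1)) with hq
    set o : ℤ → ℝ × ℝ := fun n => (x n, x (n-1)) with ho
    have h0 : o 0 = q := by
      simp only [ho, hq]
      norm_num
    have hrec : ∀ n : ℤ, o (n+1) = henon a b (o n) := by
      intro n
      simp only [ho, henon]
      rw [add_sub_cancel_right]
      exact Prod.ext (hxrec n) rfl
    have hbd : Bornology.IsBounded (Set.range o) := by
      rw [isBounded_iff_forall_norm_le]
      refine ⟨R, ?_⟩
      rintro _ ⟨n, rfl⟩
      rw [Prod.norm_def]
      simp only [Real.norm_eq_abs]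
      exact max_le (hxb n).2 (hxb (n-1)).2
    have hqK : q ∈ henonK a b := ⟨o, h0, hrec, hbd⟩
    refine ⟨⟨q, hqK⟩, ?_⟩
    funext n
    have hXq : X q n = x n := by
      have h := horb o q h0 hrec n
      simp only [hX]
      rw [← h]
    simp only [hitin, hXq]
    by_cases hs1 : s n = 1
    · rw [if_pos ((hxsgn n).2 hs1), hs1]
    · rw [if_neg (fun hp => hs1 ((hxsgn n).1 hp))]
      rcases fin2cases (s n) with h | h
      · rw [h]
      · exact absurd h hs1
  have hcontX : ∀ n : ℤ, Continuous fun p : henonK a b => X (p:ℝ×ℝ) n := by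
    intro n
    exact continuous_fst.comp ((hcontpow n).comp continuous_subtype_val)
  have hXne : ∀ (p : henonK a b) (n : ℤ), ¬ (0 < X (p:ℝ×ℝ) n) → X (p:ℝ×ℝ) n < 0 := by
    intro p n hp
    have h := (hKbound _ p.2 n).1
    rcases lt_trichotomy (X (p:ℝ×ℝ) n) 0 with h1 | h1 | h1
    · exact h1
    · exfalso; rw [h1] at h; simp at h; linarith
    · exact absurd h1 hp
  have hcont_itin : Continuous itin := by
    refine continuous_pi fun n => ?_
    refine IsLocallyConstant.continuous ?_
    intro U
    have hopen1 : IsOpen {p : henonK a b | 0 < X (p:ℝ×ℝ) n} :=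
      isOpen_lt continuous_const (hcontX n)
    have hopen0 : IsOpen {p : henonK a b | X (p:ℝ×ℝ) n < 0} :=
      isOpen_lt (hcontX n) continuous_const
    by_cases h0 : (0 : Fin 2) ∈ U <;> by_cases h1 : (1 : Fin 2) ∈ U
    · have : (fun p : henonK a b => itin p n) ⁻¹' U = Set.univ := by
        ext p
        simp only [Set.mem_preimage, Set.mem_univ, iff_true, hitin]
        by_cases hp : 0 < X (p:ℝ×ℝ) n
        · rw [if_pos hp]; exact h1
        · rw [if_neg hp]; exact h0
      rw [this]; exact isOpen_univ
    · have : (fun p : henonK a b => itin p n) ⁻¹' U = {p : henonK a b | X (p:ℝ×ℝ) n < 0} := by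
        ext p
        simp only [Set.mem_preimage, Set.mem_setOf_eq, hitin]
        by_cases hp : 0 < X (p:ℝ×ℝ) n
        · rw [if_pos hp]
          constructor
          · intro hU; exact absurd hU h1
          · intro hlt; linarith
        · rw [if_neg hp]
          constructor
          · intro _; exact hXne p n hp
          · intro _; exact h0
      rw [this]; exact hopen0
    · have : (fun p : henonK a b => itin p n) ⁻¹' U = {p : henonK a b | 0 < X (p:ℝ×ℝ) n} := by
        ext p
        simp only [Set.mem_preimage, Set.mem_setOf_eq, hitin]
        by_cases hp : 0 < X (p:ℝ×ℝ) n
        · rw [if_pos hp]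
          exact ⟨fun _ => hp, fun _ => h1⟩
        · rw [if_neg hp]
          exact ⟨fun hU => absurd hU h0, fun hlt => absurd hlt hp⟩
      rw [this]; exact hopen1
    · have : (fun p : henonK a b => itin p n) ⁻¹' U = ∅ := by
        ext p
        simp only [Set.mem_preimage, Set.mem_empty_iff_false, iff_false, hitin]
        by_cases hp : 0 < X (p:ℝ×ℝ) n
        · rw [if_pos hp]; exact h1
        · rw [if_neg hp]; exact h0
      rw [this]; exact isOpen_empty
  set eqv : henonK a b ≃ Sigma2 := Equiv.ofBijective itin ⟨hinj, hsurj⟩ with heqv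
  have hconte : Continuous eqv := hcont_itin
  refine ⟨hmaps, hconte.homeoOfEquivCompactToT2, ?_⟩
  intro p hq
  show eqv ⟨henon a b (p:ℝ×ℝ), hq⟩ = shift (eqv p)
  show itin ⟨henon a b (p:ℝ×ℝ), hq⟩ = shift (itin p)
  funext n
  simp only [hitin, shift]
  have hXs : X (henon a b (p:ℝ×ℝ)) n = X (p:ℝ×ℝ) (n+1) := by
    simp only [hX]
    rw [zpow_add_one, Equiv.Perm.mul_apply, hHeapp]
  rw [hXs]
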